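/- Let A be self-adjoint on a space of signature (p,q) with all eigenvalues real, such that 0 is a Jordan-simple eigenvalue (A vanishes on the generalized 0-eigenspace) and such that for every nonzero real eigenvalue λ the restriction of the bilinear form to the generalized eigenspace E_λ is definite. Then A is Jordan simple (diagonalizable over ℝ). -/

import Mathlib

/-- A symmetric bilinear form has signature `(p,q)` if there is an orthogonal basis
with `p` vectors of square `-1` and `q` vectors of square `+1`. -/
def HasSignature {V : Type*} [AddCommGroup V] [Module ℝ V]
    (B : LinearMap.BilinForm ℝ V) (p q : ℕ) : Prop :=
  ∃ e : Module.Basis (Fin p ⊕ Fin q) ℝ V,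
    (∀ i j, i ≠ j → B (e i) (e j) = 0) ∧
    (∀ i : Fin p, B (e (Sum.inl i)) (e (Sum.inl i)) = -1) ∧
    (∀ i : Fin q, B (e (Sum.inr i)) (e (Sum.inr i)) = 1)

/-- The complex spectrum of a real linear operator: the spectrum of its complexification. -/
noncomputable def specC {V : Type*} [AddCommGroup V] [Module ℝ V]
    (A : Module.End ℝ V) : Set ℂ :=
  spectrum ℂ (LinearMap.baseChange ℂ A)

theorem stmt17 {V : Type*} [AddCommGroup V] [Module ℝ V] [FiniteDimensional ℝ V]
    (B : LinearMap.BilinForm ℝ V) (hsymm : ∀ x y, B x y = B y x)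
    (hnd : B.Nondegenerate)
    (p q : ℕ) (hsig : HasSignature B p q)
    (A : Module.End ℝ V) (hA : ∀ x y, B (A x) y = B x (A y))
    -- all eigenvalues of A are real
    (hreal : ∀ mu ∈ specC A, mu.im = 0)
    -- 0 is a Jordan-simple eigenvalue: A vanishes on the generalized 0-eigenspace
    (h0 : ∀ x ∈ A.maxGenEigenspace 0, A x = 0)
    -- for every nonzero real eigenvalue λ the form is definite on E_λ
    (hdef : ∀ lam : ℝ, lam ≠ 0 →
      (∀ x ∈ A.maxGenEigenspace lam, x ≠ 0 → 0 < B x x) ∨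
      (∀ x ∈ A.maxGenEigenspace lam, x ≠ 0 → B x x < 0)) :
    -- A is Jordan simple: A - λ·Id vanishes on each generalized eigenspace
    ∀ lam : ℝ, ∀ x ∈ A.maxGenEigenspace lam, A x = lam • x := by
  intro lam x hx
  rcases eq_or_ne lam 0 with hl | hl
  · subst hl; simpa using h0 x hx
  by_contra hcon
  set N : Module.End ℝ V := A - lam • 1 with hNdef
  have hNsa : ∀ a b, B (N a) b = B a (N b) := by
    intro a b
    simp only [hNdef, LinearMap.sub_apply, LinearMap.smul_apply, Module.End.one_apply,
      map_sub, LinearMap.map_smul, LinearMap.sub_apply, LinearMap.smul_apply, hA a b]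
  have hNx : N x ≠ 0 := by
    intro h
    apply hcon
    have := sub_eq_zero.mp (by simpa [hNdef] using h)
    simpa using this
  obtain ⟨n, hn⟩ := (Module.End.mem_maxGenEigenspace A lam x).mp hx
  have hex : ∃ k : ℕ, (N ^ (k + 1)) x = 0 := by
    rcases Nat.eq_zero_or_pos n with h0' | h0'
    · exfalso; apply hNx; simp [hNdef]
      have : x = 0 := by simpa [h0'] using hn
      simp [this]
    · exact ⟨n - 1, by simpa [Nat.sub_add_cancel h0'] using hn⟩
  classical
  let k := Nat.find hex
  have hk1 : (N ^ (k + 1)) x = 0 := Nat.find_spec hex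
  have hkpos : 1 ≤ k := by
    by_contra hk0
    have : k = 0 := by omega
    apply hNx; simpa [this] using hk1
  have hky : (N ^ k) x ≠ 0 := by
    have := Nat.find_min hex (show k - 1 < k by omega)
    simpa [Nat.sub_add_cancel hkpos] using this
  set y := (N ^ k) x with hy
  have hNy : N y = 0 := by
    have : (N ^ (k + 1)) x = N ((N ^ k) x) := by
      rw [pow_succ']; rfl
    rw [hy, ← this, hk1]
  have hymem : y ∈ A.maxGenEigenspace lam :=
    (Module.End.mem_maxGenEigenspace A lam y).mpr ⟨1, by simpa [hNdef] using hNy⟩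
  have hByy : B y y = 0 := by
    have hdecomp : y = N ((N ^ (k - 1)) x) := by
      rw [hy, ← Module.End.mul_apply, ← pow_succ', Nat.sub_add_cancel hkpos]
    calc B y y = B (N ((N ^ (k-1)) x)) y := by rw [← hdecomp]
    _ = B ((N ^ (k-1)) x) (N y) := hNsa _ _
    _ = 0 := by rw [hNy]; simp
  rcases hdef lam hl with hpos | hneg
  · exact absurd hByy (ne_of_gt (hpos y hymem hky))
  · exact absurd hByy (ne_of_lt (hneg y hymem hky))
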